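/- Let u : ℝ → ℤ → ℝ be differentiable in t and satisfy u̇ₙ = (uₙ₊₁ + uₙ)(uₙ + uₙ₋₁)(uₙ₊₂ − uₙ₋₂). Define v s n = (−1)ⁿ · u (−s) n. Then v satisfies v̇ₙ = (vₙ₊₁ − vₙ)(vₙ − vₙ₋₁)(vₙ₊₂ − vₙ₋₂), where v̇ₙ is the derivative with respect to s. -/

import Mathlib

/-- Transformation T7 relates equation (E8) to equation (E5) with a = b = c = 0. -/
theorem stmt_11 (u v : ℝ → ℤ → ℝ)
    (hu : ∀ t n, HasDerivAt (fun s => u s n)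
      ((u t (n + 1) + u t n) * (u t n + u t (n - 1)) * (u t (n + 2) - u t (n - 2))) t)
    (hv : ∀ s n, v s n = (-1 : ℝ) ^ n * u (-s) n) :
    ∀ s n, HasDerivAt (fun r => v r n)
      ((v s (n + 1) - v s n) * (v s n - v s (n - 1)) * (v s (n + 2) - v s (n - 2))) s := by
  intro s n
  have h1 : HasDerivAt (fun r : ℝ => u (-r) n)
      (((u (-s) (n + 1) + u (-s) n) * (u (-s) n + u (-s) (n - 1)) *
        (u (-s) (n + 2) - u (-s) (n - 2))) * (-1)) s :=
    (hu (-s) n).comp s (hasDerivAt_neg s)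
  have h2 := h1.const_mul ((-1 : ℝ) ^ n)
  have hne : (-1 : ℝ) ≠ 0 := by norm_num
  have hsq : ((-1 : ℝ) ^ n) * ((-1 : ℝ) ^ n) = 1 := by
    rw [← zpow_add₀ hne]
    exact Even.neg_one_zpow ⟨n, rfl⟩
  rw [show (fun r => v r n) = fun y => (-1:ℝ)^n * u (-y) n by funext r; exact hv r n]
  refine h2.congr_deriv (Eq.symm ?_)
  · simp only [hv, zpow_add₀ hne, zpow_sub₀ hne]
    linear_combination (-((-1:ℝ)^n) * (u (-s) (n + 1) + u (-s) n) * (u (-s) n + u (-s) (n - 1)) *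
      (u (-s) (n + 2) - u (-s) (n - 2))) * hsq
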